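/- Up to isomorphism, the finite convex geometries of convex dimension at most 2 are exactly the convex geometries (F, ch) where F is a finite set of 1-dimensional circles, i.e., F ⊆ {(a,b) ∈ ℝ² : a ≤ b} (pairs interpreted as point-pairs {a,b} ⊆ ℝ), and ch(X) = {C ∈ F : C ⊆ conv(⋃ X)} with conv taken in ℝ. -/

import Mathlib

/-- The two-point set `{a, b} ⊆ ℝ` of a 1-dimensional circle `(a, b)` with `a ≤ b`. -/
def pts1 (p : ℝ × ℝ) : Set ℝ := {p.1, p.2}

/-- The closure operator of a set `F` of 1-dimensional circles:
`ch1 F X = {C ∈ F : C ⊆ conv(⋃ X)}`, with `conv` taken in `ℝ`. -/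
def ch1 (F X : Set (ℝ × ℝ)) : Set (ℝ × ℝ) :=
  {C | C ∈ F ∧ pts1 C ⊆ convexHull ℝ (⋃ D ∈ X, pts1 D)}

/-- A closed set `X` of the convex geometry `(U, Φ)` is meet-irreducible in the
lattice of closed sets: it is closed, not the top element `univ`, and whenever it is
the intersection (= meet) of two closed sets, it equals one of them. -/
def MirClosed {U : Type*} (Φ : Set U → Set U) (X : Set U) : Prop :=
  Φ X = X ∧ X ≠ Set.univ ∧
    ∀ Y Z : Set U, Φ Y = Y → Φ Z = Z → Y ∩ Z = X → Y = X ∨ Z = X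

/-- The convex geometry `(U, Φ)` has convex dimension at most 2: the set of
meet-irreducible elements of its lattice of closed sets has width at most 2. -/
def CdimLe2 {U : Type*} (Φ : Set U → Set U) : Prop :=
  ∀ A : Finset (Set U), (∀ X ∈ A, MirClosed Φ X) →
    IsAntichain (· ⊆ ·) (↑A : Set (Set U)) → A.card ≤ 2

open Set

section Helpers
variable {U : Type*}

lemma closed_sInter (Φ : Set U → Set U) (hext : ∀ X, X ⊆ Φ X)
    (hmono : ∀ X Y : Set U, X ⊆ Y → Φ X ⊆ Φ Y) (C : Set (Set U))
    (hC : ∀ P ∈ C, Φ P = P) : Φ (⋂₀ C) = ⋂₀ C := by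
  apply subset_antisymm
  · intro x hx P hP
    have h1 : Φ (⋂₀ C) ⊆ Φ P := hmono _ _ (sInter_subset_of_mem hP)
    rw [hC P hP] at h1
    exact h1 hx
  · exact hext _

lemma closed_inter (Φ : Set U → Set U) (hext : ∀ X, X ⊆ Φ X)
    (hmono : ∀ X Y : Set U, X ⊆ Y → Φ X ⊆ Φ Y) {A B : Set U}
    (hA : Φ A = A) (hB : Φ B = B) : Φ (A ∩ B) = A ∩ B := by
  apply subset_antisymm
  · intro x hx
    constructor
    · have := hmono (A ∩ B) A inter_subset_left; rw [hA] at this; exact this hx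
    · have := hmono (A ∩ B) B inter_subset_right; rw [hB] at this; exact this hx
  · exact hext _

lemma sep_mir [Fintype U] (Φ : Set U → Set U) (hext : ∀ X, X ⊆ Φ X)
    (hmono : ∀ X Y : Set U, X ⊆ Y → Φ X ⊆ Φ Y) {X : Set U} (hX : Φ X = X) {u : U}
    (hu : u ∉ X) : ∃ M, MirClosed Φ M ∧ X ⊆ M ∧ u ∉ M := by
  classical
  have hfin : ({Z | Φ Z = Z ∧ X ⊆ Z ∧ u ∉ Z} : Set (Set U)).Finite := Set.toFinite _
  have hne : ({Z | Φ Z = Z ∧ X ⊆ Z ∧ u ∉ Z} : Set (Set U)).Nonempty :=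
    ⟨X, hX, subset_rfl, hu⟩
  obtain ⟨M, hMS, hmax'⟩ := Set.Finite.exists_maximalFor id _ hfin hne
  have hmax : ∀ Z ∈ ({Z | Φ Z = Z ∧ X ⊆ Z ∧ u ∉ Z} : Set (Set U)), M ⊆ Z → M = Z :=
    fun Z hZ hMZ => subset_antisymm hMZ (hmax' hZ hMZ)
  obtain ⟨hMc, hXM, huM⟩ := hMS
  refine ⟨M, ⟨hMc, ?_, ?_⟩, hXM, huM⟩
  · rintro rfl; exact huM (mem_univ u)
  · intro Y Z hY hZ hYZ
    have hMY : M ⊆ Y := by rw [← hYZ]; exact inter_subset_left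
    have hMZ : M ⊆ Z := by rw [← hYZ]; exact inter_subset_right
    by_cases huY : u ∈ Y
    · by_cases huZ : u ∈ Z
      · exact absurd (hYZ ▸ (⟨huY, huZ⟩ : u ∈ Y ∩ Z)) huM
      · exact Or.inr (hmax Z ⟨hZ, hXM.trans hMZ, huZ⟩ hMZ).symm
    · exact Or.inl (hmax Y ⟨hY, hXM.trans hMY, huY⟩ hMY).symm

end Helpers

section Chain

lemma chain_filter_le {α : Type*} [PartialOrder α] (C : Finset α)
    (hC : IsChain (· ≤ ·) (↑C : Set α)) (p q : α → Prop) [DecidablePred p] [DecidablePred q]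
    (hp : ∀ P ∈ C, ∀ Q ∈ C, p P → P ≤ Q → p Q) (hq : ∀ P ∈ C, ∀ Q ∈ C, q P → P ≤ Q → q Q)
    (hcard : (C.filter p).card ≤ (C.filter q).card) : C.filter p ⊆ C.filter q := by
  classical
  by_contra hsub
  obtain ⟨P, hPp, hPq⟩ := Finset.not_subset.mp hsub
  have hPC : P ∈ C := (Finset.mem_filter.mp hPp).1
  have hpP : p P := (Finset.mem_filter.mp hPp).2
  have hqP : ¬ q P := fun h => hPq (Finset.mem_filter.mpr ⟨hPC, h⟩)
  have h1 : C.filter q ⊆ (C.filter (fun Q => P ≤ Q)).erase P := by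
    intro Q hQ
    have hQC := (Finset.mem_filter.mp hQ).1
    have hqQ := (Finset.mem_filter.mp hQ).2
    have hne : Q ≠ P := by rintro rfl; exact hqP hqQ
    have hPQ : P ≤ Q := by
      rcases hC (Finset.mem_coe.mpr hQC) (Finset.mem_coe.mpr hPC) hne with h | h
      · exact absurd (hq Q hQC P hPC hqQ h) hqP
      · exact h
    exact Finset.mem_erase.mpr ⟨hne, Finset.mem_filter.mpr ⟨hQC, hPQ⟩⟩
  have h2 : (C.filter (fun Q => P ≤ Q)) ⊆ C.filter p := by
    intro Q hQ
    have h := Finset.mem_filter.mp hQ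
    exact Finset.mem_filter.mpr ⟨h.1, hp P hPC Q h.1 hpP h.2⟩
  have h3 : P ∈ C.filter (fun Q => P ≤ Q) := Finset.mem_filter.mpr ⟨hPC, le_refl P⟩
  have h5 : 0 < (C.filter (fun Q => P ≤ Q)).card := Finset.card_pos.mpr ⟨P, h3⟩
  have h6 := Finset.card_le_card h1
  rw [Finset.card_erase_of_mem h3] at h6
  have h4 := Finset.card_le_card h2
  omega

lemma two_chain_assign {α : Type*} [PartialOrder α] {P C1 C2 : Set α} {a b : α}
    (h1 : IsChain (· ≤ ·) C1) (h2 : IsChain (· ≤ ·) C2) (hcov : P = C1 ∪ C2)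
    (ha : a ∈ P) (hb : b ∈ P) (hab : ¬ a ≤ b) (hba : ¬ b ≤ a) :
    ∃ D1 D2 : Set α, IsChain (· ≤ ·) D1 ∧ IsChain (· ≤ ·) D2 ∧ P = D1 ∪ D2 ∧ a ∈ D1 ∧ b ∈ D2 := by
  have hne : a ≠ b := fun h => hab (h ▸ le_refl a)
  rw [hcov] at ha hb
  rcases hb with hb1 | hb2
  · have ha2 : a ∈ C2 := by
      rcases ha with ha1 | ha2
      · rcases h1 ha1 hb1 hne with h | h
        · exact absurd h hab
        · exact absurd h hba
      · exact ha2
    exact ⟨C2, C1, h2, h1, by rw [hcov, Set.union_comm], ha2, hb1⟩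
  · have ha1 : a ∈ C1 := by
      rcases ha with ha1 | ha2
      · exact ha1
      · rcases h2 ha2 hb2 hne with h | h
        · exact absurd h hab
        · exact absurd h hba
    exact ⟨C1, C2, h1, h2, hcov, ha1, hb2⟩

lemma dil2 {α : Type*} [PartialOrder α] [DecidableEq α] (S : Finset α)
    (h3 : ∀ a ∈ S, ∀ b ∈ S, ∀ c ∈ S,
      ¬a ≤ b → ¬b ≤ a → ¬a ≤ c → ¬c ≤ a → ¬b ≤ c → ¬c ≤ b → False) :
    ∃ D1 D2 : Set α, IsChain (· ≤ ·) D1 ∧ IsChain (· ≤ ·) D2 ∧ (↑S : Set α) = D1 ∪ D2 := by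
  classical
  revert h3
  induction S using Finset.strongInductionOn with
  | _ S ih =>
  intro h3
  by_cases hchain : IsChain (· ≤ ·) (↑S : Set α)
  · exact ⟨↑S, ∅, hchain, by simp [IsChain, Set.Pairwise], (Set.union_empty _).symm⟩
  by_cases hgood : ∃ a ∈ S, ∃ b ∈ S, ¬a ≤ b ∧ ¬b ≤ a ∧
      S.filter (fun x => a ≤ x ∨ b ≤ x) ≠ S ∧ S.filter (fun x => x ≤ a ∨ x ≤ b) ≠ S
  · obtain ⟨a, haS, b, hbS, hab, hba, hSp, hSm⟩ := hgood
    set Sp := S.filter (fun x => a ≤ x ∨ b ≤ x) with hSpdef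
    set Sm := S.filter (fun x => x ≤ a ∨ x ≤ b) with hSmdef
    have hcov : ∀ x ∈ S, x ∈ Sp ∨ x ∈ Sm := by
      intro x hx
      by_contra hc
      push_neg at hc
      simp only [hSpdef, hSmdef, Finset.mem_filter, not_and, not_or] at hc
      obtain ⟨hc1, hc2⟩ := hc
      obtain ⟨h1, h2⟩ := hc1 hx
      obtain ⟨h3', h4⟩ := hc2 hx
      exact h3 a haS b hbS x hx hab hba h1 h3' h2 h4
    have hsubP : Sp ⊂ S := (Finset.filter_subset _ _).ssubset_of_ne hSp
    have hsubM : Sm ⊂ S := (Finset.filter_subset _ _).ssubset_of_ne hSm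
    have h3P : ∀ a' ∈ Sp, ∀ b' ∈ Sp, ∀ c' ∈ Sp, ¬a' ≤ b' → ¬b' ≤ a' → ¬a' ≤ c' → ¬c' ≤ a' →
        ¬b' ≤ c' → ¬c' ≤ b' → False := fun a' h1 b' h2 c' hc =>
      h3 a' (Finset.filter_subset _ _ h1) b' (Finset.filter_subset _ _ h2)
        c' (Finset.filter_subset _ _ hc)
    have h3M : ∀ a' ∈ Sm, ∀ b' ∈ Sm, ∀ c' ∈ Sm, ¬a' ≤ b' → ¬b' ≤ a' → ¬a' ≤ c' → ¬c' ≤ a' →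
        ¬b' ≤ c' → ¬c' ≤ b' → False := fun a' h1 b' h2 c' hc =>
      h3 a' (Finset.filter_subset _ _ h1) b' (Finset.filter_subset _ _ h2)
        c' (Finset.filter_subset _ _ hc)
    obtain ⟨C1, C2, hC1, hC2, hcovP⟩ := ih Sp hsubP h3P
    obtain ⟨E1, E2, hE1, hE2, hcovM⟩ := ih Sm hsubM h3M
    have haSp : a ∈ Sp := Finset.mem_filter.mpr ⟨haS, Or.inl le_rfl⟩
    have hbSp : b ∈ Sp := Finset.mem_filter.mpr ⟨hbS, Or.inr le_rfl⟩
    have haSm : a ∈ Sm := Finset.mem_filter.mpr ⟨haS, Or.inl le_rfl⟩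
    have hbSm : b ∈ Sm := Finset.mem_filter.mpr ⟨hbS, Or.inr le_rfl⟩
    obtain ⟨C1', C2', hC1', hC2', hcovP', haC1, hbC2⟩ :=
      two_chain_assign hC1 hC2 hcovP (Finset.mem_coe.mpr haSp) (Finset.mem_coe.mpr hbSp) hab hba
    obtain ⟨E1', E2', hE1', hE2', hcovM', haE1, hbE2⟩ :=
      two_chain_assign hE1 hE2 hcovM (Finset.mem_coe.mpr haSm) (Finset.mem_coe.mpr hbSm) hab hba
    have hminC : ∀ x ∈ C1', a ≤ x := by
      intro x hx
      have hxSp : x ∈ Sp := Finset.mem_coe.mp (hcovP' ▸ Or.inl hx)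
      rcases (Finset.mem_filter.mp hxSp).2 with h | h
      · exact h
      · rcases eq_or_ne x a with rfl | hne'
        · exact le_rfl
        rcases hC1' hx haC1 hne' with h' | h'
        · exact absurd (h.trans h') hba
        · exact h'
    have hminC2 : ∀ x ∈ C2', b ≤ x := by
      intro x hx
      have hxSp : x ∈ Sp := Finset.mem_coe.mp (hcovP' ▸ Or.inr hx)
      rcases (Finset.mem_filter.mp hxSp).2 with h | h
      · rcases eq_or_ne x b with rfl | hne'
        · exact le_rfl
        rcases hC2' hx hbC2 hne' with h' | h'
        · exact absurd (h.trans h') hab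
        · exact h'
      · exact h
    have hmaxE : ∀ x ∈ E1', x ≤ a := by
      intro x hx
      have hxSm : x ∈ Sm := Finset.mem_coe.mp (hcovM' ▸ Or.inl hx)
      rcases (Finset.mem_filter.mp hxSm).2 with h | h
      · exact h
      · rcases eq_or_ne x a with rfl | hne'
        · exact le_rfl
        rcases hE1' hx haE1 hne' with h' | h'
        · exact h'
        · exact absurd (h'.trans h) hab
    have hmaxE2 : ∀ x ∈ E2', x ≤ b := by
      intro x hx
      have hxSm : x ∈ Sm := Finset.mem_coe.mp (hcovM' ▸ Or.inr hx)
      rcases (Finset.mem_filter.mp hxSm).2 with h | h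
      · rcases eq_or_ne x b with rfl | hne'
        · exact le_rfl
        rcases hE2' hx hbE2 hne' with h' | h'
        · exact h'
        · exact absurd (h'.trans h) hba
      · exact h
    refine ⟨E1' ∪ C1', E2' ∪ C2', ?_, ?_, ?_⟩
    · intro x hx y hy hne'
      rcases hx with hx | hx <;> rcases hy with hy | hy
      · exact hE1' hx hy hne'
      · exact Or.inl ((hmaxE x hx).trans (hminC y hy))
      · exact Or.inr ((hmaxE y hy).trans (hminC x hx))
      · exact hC1' hx hy hne'
    · intro x hx y hy hne'
      rcases hx with hx | hx <;> rcases hy with hy | hy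
      · exact hE2' hx hy hne'
      · exact Or.inl ((hmaxE2 x hx).trans (hminC2 y hy))
      · exact Or.inr ((hmaxE2 y hy).trans (hminC2 x hx))
      · exact hC2' hx hy hne'
    · ext x
      simp only [Set.mem_union, Finset.mem_coe]
      constructor
      · intro hx
        rcases hcov x hx with h | h
        · have : x ∈ C1' ∪ C2' := hcovP' ▸ Finset.mem_coe.mpr h
          rcases this with h' | h'
          · exact Or.inl (Or.inr h')
          · exact Or.inr (Or.inr h')
        · have : x ∈ E1' ∪ E2' := hcovM' ▸ Finset.mem_coe.mpr h
          rcases this with h' | h'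
          · exact Or.inl (Or.inl h')
          · exact Or.inr (Or.inl h')
      · intro hx
        rcases hx with (h | h) | (h | h)
        · have hxx : x ∈ (↑Sm : Set α) := by rw [hcovM']; exact Or.inl h
          exact Finset.filter_subset _ _ (Finset.mem_coe.mp hxx)
        · have hxx : x ∈ (↑Sp : Set α) := by rw [hcovP']; exact Or.inl h
          exact Finset.filter_subset _ _ (Finset.mem_coe.mp hxx)
        · have hxx : x ∈ (↑Sm : Set α) := by rw [hcovM']; exact Or.inr h
          exact Finset.filter_subset _ _ (Finset.mem_coe.mp hxx)
        · have hxx : x ∈ (↑Sp : Set α) := by rw [hcovP']; exact Or.inr h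
          exact Finset.filter_subset _ _ (Finset.mem_coe.mp hxx)
  · push_neg at hgood
    have hSne : S.Nonempty := by
      rcases S.eq_empty_or_nonempty with rfl | h
      · exact absurd (by simp [IsChain, Set.Pairwise]) hchain
      · exact h
    obtain ⟨x0, hx0S, hx0min'⟩ := Finset.exists_minimal hSne
    have hx0min : ∀ z ∈ S, ¬ z < x0 := fun z hz hlt =>
      lt_irrefl _ (lt_of_lt_of_le hlt (hx0min' hz hlt.le))
    have hTne : (S.filter (fun z => x0 ≤ z)).Nonempty :=
      ⟨x0, Finset.mem_filter.mpr ⟨hx0S, le_rfl⟩⟩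
    obtain ⟨y0, hy0T, hy0max'⟩ := Finset.exists_maximal hTne
    have hy0max : ∀ z ∈ S.filter (fun z => x0 ≤ z), ¬ y0 < z := fun z hz hlt =>
      lt_irrefl _ (lt_of_le_of_lt (hy0max' hz hlt.le) hlt)
    have hy0S : y0 ∈ S := (Finset.mem_filter.mp hy0T).1
    have hx0y0 : x0 ≤ y0 := (Finset.mem_filter.mp hy0T).2
    have hy0maxS : ∀ z ∈ S, ¬ y0 < z := by
      intro z hz hlt
      exact hy0max z (Finset.mem_filter.mpr ⟨hz, hx0y0.trans hlt.le⟩) hlt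
    have hS' : IsChain (· ≤ ·) (↑(S \ ({x0, y0} : Finset α)) : Set α) := by
      intro p hp q hq hne
      by_contra hc
      push_neg at hc
      obtain ⟨hc1, hc2⟩ := hc
      have hpS : p ∈ S := (Finset.mem_sdiff.mp (Finset.mem_coe.mp hp)).1
      have hqS : q ∈ S := (Finset.mem_sdiff.mp (Finset.mem_coe.mp hq)).1
      have hpne : p ∉ ({x0, y0} : Finset α) := (Finset.mem_sdiff.mp (Finset.mem_coe.mp hp)).2
      have hqne : q ∉ ({x0, y0} : Finset α) := (Finset.mem_sdiff.mp (Finset.mem_coe.mp hq)).2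
      simp only [Finset.mem_insert, Finset.mem_singleton, not_or] at hpne hqne
      by_cases hP1 : S.filter (fun x => p ≤ x ∨ q ≤ x) = S
      · have hx0f : x0 ∈ S.filter (fun x => p ≤ x ∨ q ≤ x) := hP1.symm ▸ hx0S
        rcases (Finset.mem_filter.mp hx0f).2 with h | h
        · exact hx0min p hpS (lt_of_le_of_ne h hpne.1)
        · exact hx0min q hqS (lt_of_le_of_ne h hqne.1)
      · have hP2 := hgood p hpS q hqS hc1 hc2 hP1
        have hy0f : y0 ∈ S.filter (fun x => x ≤ p ∨ x ≤ q) := hP2.symm ▸ hy0S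
        rcases (Finset.mem_filter.mp hy0f).2 with h | h
        · exact hy0maxS p hpS (lt_of_le_of_ne h (Ne.symm hpne.2))
        · exact hy0maxS q hqS (lt_of_le_of_ne h (Ne.symm hqne.2))
    refine ⟨↑(S \ ({x0, y0} : Finset α)), {x0, y0}, hS', ?_, ?_⟩
    · intro x hx y hy hne
      rcases hx with rfl | hx <;> rcases hy with rfl | hy
      · exact absurd rfl hne
      · rw [Set.mem_singleton_iff] at hy; subst hy; exact Or.inl hx0y0
      · rw [Set.mem_singleton_iff] at hx; subst hx; exact Or.inr hx0y0
      · rw [Set.mem_singleton_iff] at hx hy; subst hx; subst hy; exact absurd rfl hne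
    · ext x
      simp only [Set.mem_union, Finset.coe_sdiff, Set.mem_diff, Finset.mem_coe,
        Finset.coe_insert, Finset.coe_singleton, Set.mem_insert_iff, Set.mem_singleton_iff]
      constructor
      · intro hx
        by_cases h : x = x0 ∨ x = y0
        · exact Or.inr h
        · exact Or.inl ⟨hx, by simpa using h⟩
      · rintro (⟨h, _⟩ | (rfl | rfl))
        · exact h
        · exact hx0S
        · exact hy0S

open scoped Classical in
lemma mem_sInter_iff_card {U : Type*} (T : Finset (Set U))
    (hT : IsChain (· ≤ ·) (↑T : Set (Set U))) (p : Set U → Prop)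
    (hp : ∀ P ∈ T, ∀ Q ∈ T, p P → P ≤ Q → p Q) (u : U) :
    u ∈ ⋂₀ {P | P ∈ T ∧ p P} ↔
      (T.filter p).card ≤ (T.filter (fun P => u ∈ P)).card := by
  constructor
  · intro h
    apply Finset.card_le_card
    intro P hP
    have h' := Finset.mem_filter.mp hP
    exact Finset.mem_filter.mpr ⟨h'.1, Set.mem_sInter.mp h P ⟨h'.1, h'.2⟩⟩
  · intro h
    rw [Set.mem_sInter]
    intro P hP
    obtain ⟨hPT, hPp⟩ := hP
    have hsub := chain_filter_le T hT p (fun P => u ∈ P) hp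
      (fun P _ Q _ hu hle => Set.le_iff_subset.mp hle hu) h
    exact (Finset.mem_filter.mp (hsub (Finset.mem_filter.mpr ⟨hPT, hPp⟩))).2

end Chain

section RealHelpers

lemma subset_ch1 {F Y : Set (ℝ × ℝ)} (hYF : Y ⊆ F) : Y ⊆ ch1 F Y :=
  fun C hC => ⟨hYF hC, fun _x hx =>
    subset_convexHull ℝ _ (Set.mem_biUnion hC hx)⟩

lemma biUnion_pts_subset {Y : Set (ℝ × ℝ)} {a b : ℝ}
    (h : ∀ p ∈ Y, a ≤ p.1 ∧ p.1 ≤ b ∧ a ≤ p.2 ∧ p.2 ≤ b) :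
    convexHull ℝ (⋃ D ∈ Y, pts1 D) ⊆ Icc a b := by
  apply convexHull_min _ (convex_Icc a b)
  intro x hx
  simp only [Set.mem_iUnion] at hx
  obtain ⟨D, hD, hx⟩ := hx
  obtain ⟨h1, h2, h3, h4⟩ := h D hD
  rcases hx with rfl | hx
  · exact ⟨h1, h2⟩
  · rw [Set.mem_singleton_iff] at hx; subst hx; exact ⟨h3, h4⟩

lemma Icc_subset_of_mem {s : Set ℝ} (hs : Convex ℝ s) {a b : ℝ} (hab : a ≤ b)
    (ha : a ∈ s) (hb : b ∈ s) : Icc a b ⊆ s := by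
  rw [← segment_eq_Icc hab]; exact hs.segment_subset ha hb

lemma fst_mem_pts1 (p : ℝ × ℝ) : p.1 ∈ pts1 p := Or.inl rfl
lemma snd_mem_pts1 (p : ℝ × ℝ) : p.2 ∈ pts1 p := Or.inr rfl

end RealHelpers

section PhiMap
open scoped Classical

noncomputable def acnt {U : Type*} (T : Finset (Set U)) (u : U) : ℕ :=
  (T.filter (fun P => u ∈ P)).card

noncomputable def scnt {U : Type*} (T : Finset (Set U)) (X : Set U) : ℕ :=
  (T.filter (fun P => X ⊆ P)).card

lemma acnt_le {U : Type*} (T : Finset (Set U)) (u : U) : acnt T u ≤ T.card :=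
  Finset.card_filter_le _ _

lemma scnt_le {U : Type*} (T : Finset (Set U)) (X : Set U) : scnt T X ≤ T.card :=
  Finset.card_filter_le _ _

lemma scnt_le_acnt {U : Type*} (T : Finset (Set U)) {X : Set U} {u : U} (hu : u ∈ X) :
    scnt T X ≤ acnt T u := by
  apply Finset.card_le_card
  intro P hP
  have h := Finset.mem_filter.mp hP
  exact Finset.mem_filter.mpr ⟨h.1, h.2 hu⟩

lemma mem_sInter_scnt {U : Type*} (T : Finset (Set U))
    (hT : IsChain (· ≤ ·) (↑T : Set (Set U))) (X : Set U) (u : U) :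
    u ∈ ⋂₀ {P | P ∈ T ∧ X ⊆ P} ↔ scnt T X ≤ acnt T u :=
  mem_sInter_iff_card T hT (fun P => X ⊆ P)
    (fun _P _ _Q _ h hle => h.trans (Set.le_iff_subset.mp hle)) u

lemma mem_sInter_acnt {U : Type*} (T : Finset (Set U))
    (hT : IsChain (· ≤ ·) (↑T : Set (Set U))) (u1 u : U) :
    u ∈ ⋂₀ {P | P ∈ T ∧ u1 ∈ P} ↔ acnt T u1 ≤ acnt T u :=
  mem_sInter_iff_card T hT (fun P => u1 ∈ P)
    (fun _P _ _Q _ h hle => Set.le_iff_subset.mp hle h) u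

noncomputable def phimap {U : Type*} (T1 T2 : Finset (Set U)) (u : U) : ℝ × ℝ :=
  ((acnt T1 u : ℝ), ((T1.card : ℝ) + (T2.card : ℝ)) - (acnt T2 u : ℝ))

lemma phimap_inj {U : Type*} (T1 T2 : Finset (Set U)) {v u : U}
    (h : phimap T1 T2 v = phimap T1 T2 u) :
    acnt T1 v = acnt T1 u ∧ acnt T2 v = acnt T2 u := by
  have h1 : ((acnt T1 v : ℝ)) = acnt T1 u := congrArg Prod.fst h
  have h2 : ((T1.card : ℝ) + (T2.card : ℝ)) - (acnt T2 v : ℝ)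
      = ((T1.card : ℝ) + (T2.card : ℝ)) - (acnt T2 u : ℝ) := congrArg Prod.snd h
  constructor
  · exact_mod_cast h1
  · have : ((acnt T2 v : ℝ)) = (acnt T2 u : ℝ) := by linarith
    exact_mod_cast this

end PhiMap
/-- Up to isomorphism (order isomorphism of the lattices of closed
sets), the finite convex geometries `(U, Φ)` of convex dimension at most 2 are
exactly the convex geometries `(F, ch1)` where `F` is a finite set of 1-dimensional
circles, i.e. `F ⊆ {(a,b) ∈ ℝ² : a ≤ b}`, with `ch1 F X = {C ∈ F : C ⊆ conv(⋃ X)}`. -/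
theorem stmt19 {U : Type*} [Fintype U] (Φ : Set U → Set U)
    (hext : ∀ X : Set U, X ⊆ Φ X)
    (hidem : ∀ X : Set U, Φ (Φ X) = Φ X)
    (hmono : ∀ X Y : Set U, X ⊆ Y → Φ X ⊆ Φ Y)
    (hempty : Φ ∅ = ∅)
    (hae : ∀ X : Set U, Φ X = X → ∀ x y : U, x ∉ X → y ∉ X → x ≠ y →
      x ∈ Φ (X ∪ {y}) → y ∉ Φ (X ∪ {x})) :
    CdimLe2 Φ ↔
      ∃ F : Set (ℝ × ℝ), F.Finite ∧ (∀ p ∈ F, p.1 ≤ p.2) ∧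
        Nonempty ({X : Set U // Φ X = X} ≃o
          {Y : Set (ℝ × ℝ) // Y ⊆ F ∧ ch1 F Y = Y}) := by
  classical
  constructor
  · -- FORWARD DIRECTION
    intro hcdim
    have hMirfin : ({X | MirClosed Φ X} : Set (Set U)).Finite := Set.toFinite _
    set S : Finset (Set U) := hMirfin.toFinset with hSdef
    have h3 : ∀ a ∈ S, ∀ b ∈ S, ∀ c ∈ S,
        ¬a ≤ b → ¬b ≤ a → ¬a ≤ c → ¬c ≤ a → ¬b ≤ c → ¬c ≤ b → False := by
      intro a ha b hb c hc hab hba hac hca hbc hcb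
      have hab' : ¬ a ⊆ b := fun h => hab h
      have hba' : ¬ b ⊆ a := fun h => hba h
      have hac' : ¬ a ⊆ c := fun h => hac h
      have hca' : ¬ c ⊆ a := fun h => hca h
      have hbc' : ¬ b ⊆ c := fun h => hbc h
      have hcb' : ¬ c ⊆ b := fun h => hcb h
      have hne1 : a ≠ b := fun h => hab (le_of_eq h)
      have hne2 : a ≠ c := fun h => hac (le_of_eq h)
      have hne3 : b ≠ c := fun h => hbc (le_of_eq h)
      have hcard : ({a, b, c} : Finset (Set U)).card = 3 :=
        Finset.card_eq_three.mpr ⟨a, b, c, hne1, hne2, hne3, rfl⟩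
      have hmirA : ∀ X ∈ ({a, b, c} : Finset (Set U)), MirClosed Φ X := by
        intro X hX
        simp only [Finset.mem_insert, Finset.mem_singleton] at hX
        rcases hX with rfl | rfl | rfl
        · exact hMirfin.mem_toFinset.mp ha
        · exact hMirfin.mem_toFinset.mp hb
        · exact hMirfin.mem_toFinset.mp hc
      have hanti : IsAntichain (· ⊆ ·) (↑({a, b, c} : Finset (Set U)) : Set (Set U)) := by
        intro x hx y hy hne
        simp only [Finset.coe_insert, Finset.coe_singleton, Set.mem_insert_iff,
          Set.mem_singleton_iff] at hx hy
        rcases hx with rfl | rfl | rfl <;> rcases hy with rfl | rfl | rfl <;>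
          first
            | exact absurd rfl hne
            | assumption
      have := hcdim {a, b, c} hmirA hanti
      omega
    obtain ⟨D1, D2, hD1c, hD2c, hMcov⟩ := dil2 S h3
    have hD1fin : D1.Finite := Set.toFinite D1
    have hD2fin : D2.Finite := Set.toFinite D2
    set T1 : Finset (Set U) := hD1fin.toFinset with hT1def
    set T2 : Finset (Set U) := hD2fin.toFinset with hT2def
    have hT1chain : IsChain (· ≤ ·) (↑T1 : Set (Set U)) := by
      rw [hT1def, hD1fin.coe_toFinset]; exact hD1c
    have hT2chain : IsChain (· ≤ ·) (↑T2 : Set (Set U)) := by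
      rw [hT2def, hD2fin.coe_toFinset]; exact hD2c
    have hT1mir : ∀ P ∈ T1, MirClosed Φ P := by
      intro P hP
      have h1 : P ∈ D1 := hD1fin.mem_toFinset.mp hP
      have h2 : P ∈ (↑S : Set (Set U)) := by rw [hMcov]; exact Or.inl h1
      exact hMirfin.mem_toFinset.mp (Finset.mem_coe.mp h2)
    have hT2mir : ∀ P ∈ T2, MirClosed Φ P := by
      intro P hP
      have h1 : P ∈ D2 := hD2fin.mem_toFinset.mp hP
      have h2 : P ∈ (↑S : Set (Set U)) := by rw [hMcov]; exact Or.inr h1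
      exact hMirfin.mem_toFinset.mp (Finset.mem_coe.mp h2)
    -- the key membership criterion
    have keyA : ∀ X : Set U, Φ X = X → ∀ u : U,
        u ∈ X ↔ (scnt T1 X ≤ acnt T1 u ∧ scnt T2 X ≤ acnt T2 u) := by
      intro X hX u
      constructor
      · intro hu
        exact ⟨scnt_le_acnt T1 hu, scnt_le_acnt T2 hu⟩
      · rintro ⟨h1, h2⟩
        by_contra huX
        obtain ⟨M, hMmir, hXM, huM⟩ := sep_mir Φ hext hmono hX huX
        have hMD : M ∈ D1 ∪ D2 := by
          rw [← hMcov]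
          exact Finset.mem_coe.mpr (hMirfin.mem_toFinset.mpr hMmir)
        rcases hMD with hM | hM
        · exact huM (Set.mem_sInter.mp ((mem_sInter_scnt T1 hT1chain X u).mpr h1) M
            ⟨hD1fin.mem_toFinset.mpr hM, hXM⟩)
        · exact huM (Set.mem_sInter.mp ((mem_sInter_scnt T2 hT2chain X u).mpr h2) M
            ⟨hD2fin.mem_toFinset.mpr hM, hXM⟩)
    -- the image geometry
    set F' : Set (ℝ × ℝ) := Set.range (phimap T1 T2) with hF'def
    -- closedness of images of closed sets
    have himg : ∀ X : Set U, Φ X = X → ch1 F' (phimap T1 T2 '' X) = phimap T1 T2 '' X := by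
      intro X hX
      apply subset_antisymm
      · rintro C ⟨hCF, hCp⟩
        obtain ⟨v, rfl⟩ := hCF
        have hbound : convexHull ℝ (⋃ D ∈ phimap T1 T2 '' X, pts1 D) ⊆
            Set.Icc ((scnt T1 X : ℝ)) (((T1.card : ℝ) + (T2.card : ℝ)) - (scnt T2 X : ℝ)) := by
          apply biUnion_pts_subset
          rintro p ⟨u, huX, rfl⟩
          have c1 : ((scnt T1 X : ℝ)) ≤ (acnt T1 u : ℝ) :=
            Nat.cast_le.mpr (scnt_le_acnt T1 huX)
          have c2 : ((scnt T2 X : ℝ)) ≤ (acnt T2 u : ℝ) :=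
            Nat.cast_le.mpr (scnt_le_acnt T2 huX)
          have c3 : ((acnt T1 u : ℝ)) ≤ (T1.card : ℝ) := Nat.cast_le.mpr (acnt_le T1 u)
          have c4 : ((acnt T2 u : ℝ)) ≤ (T2.card : ℝ) := Nat.cast_le.mpr (acnt_le T2 u)
          have c5 : ((scnt T1 X : ℝ)) ≤ (T1.card : ℝ) := Nat.cast_le.mpr (scnt_le T1 X)
          have c6 : ((scnt T2 X : ℝ)) ≤ (T2.card : ℝ) := Nat.cast_le.mpr (scnt_le T2 X)
          refine ⟨c1, by simp only [phimap]; linarith, by simp only [phimap]; linarith,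
            by simp only [phimap]; linarith⟩
        have e1 : ((acnt T1 v : ℝ)) ∈ Set.Icc ((scnt T1 X : ℝ))
            (((T1.card : ℝ) + (T2.card : ℝ)) - (scnt T2 X : ℝ)) :=
          hbound (hCp (fst_mem_pts1 _))
        have e2 : (((T1.card : ℝ) + (T2.card : ℝ)) - (acnt T2 v : ℝ)) ∈ Set.Icc
            ((scnt T1 X : ℝ)) (((T1.card : ℝ) + (T2.card : ℝ)) - (scnt T2 X : ℝ)) :=
          hbound (hCp (snd_mem_pts1 _))
        have hv1 : scnt T1 X ≤ acnt T1 v := by exact_mod_cast e1.1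
        have hv2 : scnt T2 X ≤ acnt T2 v := by
          have h := e2.2
          have : ((scnt T2 X : ℝ)) ≤ (acnt T2 v : ℝ) := by linarith
          exact_mod_cast this
        exact ⟨v, (keyA X hX v).mpr ⟨hv1, hv2⟩, rfl⟩
      · exact subset_ch1 (by rintro p ⟨u, _, rfl⟩; exact ⟨u, rfl⟩)
    -- closedness of preimages of closed sets
    have hpre : ∀ Y : Set (ℝ × ℝ), Y ⊆ F' → ch1 F' Y = Y →
        Φ {u | phimap T1 T2 u ∈ Y} = {u | phimap T1 T2 u ∈ Y} := by
      intro Y hYF hYc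
      rcases Set.eq_empty_or_nonempty {u | phimap T1 T2 u ∈ Y} with hXe | hXne
      · rw [hXe]; exact hempty
      · obtain ⟨u1, hu1, hu1min⟩ :=
          Set.exists_min_image _ (fun u => acnt T1 u) (Set.toFinite _) hXne
        obtain ⟨u2, hu2, hu2min⟩ :=
          Set.exists_min_image _ (fun u => acnt T2 u) (Set.toFinite _) hXne
        have hXeq : {u | phimap T1 T2 u ∈ Y} =
            ⋂₀ {P | P ∈ T1 ∧ u1 ∈ P} ∩ ⋂₀ {P | P ∈ T2 ∧ u2 ∈ P} := by
          apply subset_antisymm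
          · intro u hu
            exact ⟨(mem_sInter_acnt T1 hT1chain u1 u).mpr (hu1min u hu),
                   (mem_sInter_acnt T2 hT2chain u2 u).mpr (hu2min u hu)⟩
          · rintro u ⟨h1, h2⟩
            have hA1 := (mem_sInter_acnt T1 hT1chain u1 u).mp h1
            have hB2 := (mem_sInter_acnt T2 hT2chain u2 u).mp h2
            show phimap T1 T2 u ∈ Y
            rw [← hYc]
            refine ⟨⟨u, rfl⟩, ?_⟩
            have hm1 : ((acnt T1 u1 : ℝ)) ∈ convexHull ℝ (⋃ D ∈ Y, pts1 D) :=
              subset_convexHull ℝ _ (Set.mem_biUnion hu1 (fst_mem_pts1 (phimap T1 T2 u1)))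
            have hm2 : (((T1.card : ℝ) + (T2.card : ℝ)) - (acnt T2 u2 : ℝ)) ∈
                convexHull ℝ (⋃ D ∈ Y, pts1 D) :=
              subset_convexHull ℝ _ (Set.mem_biUnion hu2 (snd_mem_pts1 (phimap T1 T2 u2)))
            have c1 : ((acnt T1 u1 : ℝ)) ≤ (T1.card : ℝ) := Nat.cast_le.mpr (acnt_le T1 u1)
            have c2 : ((acnt T2 u2 : ℝ)) ≤ (T2.card : ℝ) := Nat.cast_le.mpr (acnt_le T2 u2)
            have c3 : ((acnt T1 u : ℝ)) ≤ (T1.card : ℝ) := Nat.cast_le.mpr (acnt_le T1 u)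
            have c4 : ((acnt T2 u : ℝ)) ≤ (T2.card : ℝ) := Nat.cast_le.mpr (acnt_le T2 u)
            have cA : ((acnt T1 u1 : ℝ)) ≤ (acnt T1 u : ℝ) := Nat.cast_le.mpr hA1
            have cB : ((acnt T2 u2 : ℝ)) ≤ (acnt T2 u : ℝ) := Nat.cast_le.mpr hB2
            have hle : ((acnt T1 u1 : ℝ)) ≤ ((T1.card : ℝ) + (T2.card : ℝ)) - (acnt T2 u2 : ℝ) := by
              linarith
            have hIcc := Icc_subset_of_mem (convex_convexHull ℝ _) hle hm1 hm2
            intro x hx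
            apply hIcc
            rcases hx with rfl | hx
            · exact ⟨cA, by simp only [phimap]; linarith⟩
            · rw [Set.mem_singleton_iff] at hx; subst hx
              exact ⟨by simp only [phimap]; linarith, by simp only [phimap]; linarith⟩
        rw [hXeq, ← Set.sInter_union]
        apply closed_sInter Φ hext hmono
        rintro P (hP | hP)
        · exact (hT1mir P hP.1).1
        · exact (hT2mir P hP.1).1
    refine ⟨F', Set.finite_range _, ?_, ⟨?_⟩⟩
    · rintro p ⟨u, rfl⟩
      show ((acnt T1 u : ℝ)) ≤ ((T1.card : ℝ) + (T2.card : ℝ)) - (acnt T2 u : ℝ)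
      have c3 : ((acnt T1 u : ℝ)) ≤ (T1.card : ℝ) := Nat.cast_le.mpr (acnt_le T1 u)
      have c4 : ((acnt T2 u : ℝ)) ≤ (T2.card : ℝ) := Nat.cast_le.mpr (acnt_le T2 u)
      linarith
    · refine ⟨⟨fun X => ⟨phimap T1 T2 '' X.1, Set.image_subset_range _ _, himg X.1 X.2⟩,
        fun Y => ⟨{u | phimap T1 T2 u ∈ Y.1}, hpre Y.1 Y.2.1 Y.2.2⟩, ?_, ?_⟩, ?_⟩
      · rintro ⟨X, hX⟩
        apply Subtype.ext
        show {u | phimap T1 T2 u ∈ phimap T1 T2 '' X} = X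
        ext u
        simp only [Set.mem_setOf_eq]
        constructor
        · rintro ⟨v, hvX, hveq⟩
          obtain ⟨e1, e2⟩ := phimap_inj T1 T2 hveq
          have hv := (keyA X hX v).mp hvX
          exact (keyA X hX u).mpr ⟨e1 ▸ hv.1, e2 ▸ hv.2⟩
        · intro hu
          exact ⟨u, hu, rfl⟩
      · rintro ⟨Y, hYF, hYc⟩
        apply Subtype.ext
        show phimap T1 T2 '' {u | phimap T1 T2 u ∈ Y} = Y
        ext p
        constructor
        · rintro ⟨u, hu, rfl⟩; exact hu
        · intro hp
          obtain ⟨v, rfl⟩ := hYF hp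
          exact ⟨v, hp, rfl⟩
      · rintro ⟨X, hX⟩ ⟨Z, hZ⟩
        constructor
        · intro h
          have h' : phimap T1 T2 '' X ⊆ phimap T1 T2 '' Z := h
          refine Subtype.mk_le_mk.mpr ?_
          intro u hu
          obtain ⟨v, hvZ, hveq⟩ := h' (Set.mem_image_of_mem _ hu)
          obtain ⟨e1, e2⟩ := phimap_inj T1 T2 hveq
          have hv := (keyA Z hZ v).mp hvZ
          exact (keyA Z hZ u).mpr ⟨e1 ▸ hv.1, e2 ▸ hv.2⟩
        · intro h
          have h' : X ⊆ Z := h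
          exact Set.image_mono h'
  · -- BACKWARD DIRECTION
    rintro ⟨F, hFfin, hFcirc, ⟨e⟩⟩
    intro A hAmir hAanti
    by_contra hcard
    push_neg at hcard
    obtain ⟨B, hBA, hB3⟩ := Finset.exists_subset_card_eq (show 3 ≤ A.card by omega)
    obtain ⟨X1, X2, X3, h12, h13, h23, rfl⟩ := Finset.card_eq_three.mp hB3
    have hX1A : X1 ∈ A := hBA (by simp)
    have hX2A : X2 ∈ A := hBA (by simp)
    have hX3A : X3 ∈ A := hBA (by simp)
    have m1 := hAmir X1 hX1A
    have m2 := hAmir X2 hX2A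
    have m3 := hAmir X3 hX3A
    have i12 : ¬ X1 ⊆ X2 := hAanti (Finset.mem_coe.mpr hX1A) (Finset.mem_coe.mpr hX2A) h12
    have i21 : ¬ X2 ⊆ X1 := hAanti (Finset.mem_coe.mpr hX2A) (Finset.mem_coe.mpr hX1A) h12.symm
    have i13 : ¬ X1 ⊆ X3 := hAanti (Finset.mem_coe.mpr hX1A) (Finset.mem_coe.mpr hX3A) h13
    have i31 : ¬ X3 ⊆ X1 := hAanti (Finset.mem_coe.mpr hX3A) (Finset.mem_coe.mpr hX1A) h13.symm
    have i23 : ¬ X2 ⊆ X3 := hAanti (Finset.mem_coe.mpr hX2A) (Finset.mem_coe.mpr hX3A) h23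
    have i32 : ¬ X3 ⊆ X2 := hAanti (Finset.mem_coe.mpr hX3A) (Finset.mem_coe.mpr hX2A) h23.symm
    have j12 : ¬ (e ⟨X1, m1.1⟩).1 ⊆ (e ⟨X2, m2.1⟩).1 := fun h => i12 (e.le_iff_le.mp h)
    have j21 : ¬ (e ⟨X2, m2.1⟩).1 ⊆ (e ⟨X1, m1.1⟩).1 := fun h => i21 (e.le_iff_le.mp h)
    have j13 : ¬ (e ⟨X1, m1.1⟩).1 ⊆ (e ⟨X3, m3.1⟩).1 := fun h => i13 (e.le_iff_le.mp h)
    have j31 : ¬ (e ⟨X3, m3.1⟩).1 ⊆ (e ⟨X1, m1.1⟩).1 := fun h => i31 (e.le_iff_le.mp h)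
    have j23 : ¬ (e ⟨X2, m2.1⟩).1 ⊆ (e ⟨X3, m3.1⟩).1 := fun h => i23 (e.le_iff_le.mp h)
    have j32 : ¬ (e ⟨X3, m3.1⟩).1 ⊆ (e ⟨X2, m2.1⟩).1 := fun h => i32 (e.le_iff_le.mp h)
    -- meet-irreducibility transfers to the circle side
    have mir' : ∀ (X : Set U) (hm : MirClosed Φ X) (Z W : Set (ℝ × ℝ))
        (hZ : Z ⊆ F ∧ ch1 F Z = Z) (hW : W ⊆ F ∧ ch1 F W = W),
        Z ∩ W = (e ⟨X, hm.1⟩).1 → Z = (e ⟨X, hm.1⟩).1 ∨ W = (e ⟨X, hm.1⟩).1 := by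
      intro X hm Z W hZ hW hZW
      have hZ'c : Φ (e.symm ⟨Z, hZ⟩).1 = (e.symm ⟨Z, hZ⟩).1 := (e.symm ⟨Z, hZ⟩).2
      have hW'c : Φ (e.symm ⟨W, hW⟩).1 = (e.symm ⟨W, hW⟩).1 := (e.symm ⟨W, hW⟩).2
      have hVc : Φ ((e.symm ⟨Z, hZ⟩).1 ∩ (e.symm ⟨W, hW⟩).1)
          = (e.symm ⟨Z, hZ⟩).1 ∩ (e.symm ⟨W, hW⟩).1 :=
        closed_inter Φ hext hmono hZ'c hW'c
      have h1 : (e ⟨(e.symm ⟨Z, hZ⟩).1 ∩ (e.symm ⟨W, hW⟩).1, hVc⟩).1 ⊆ Z := by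
        have hle : (⟨(e.symm ⟨Z, hZ⟩).1 ∩ (e.symm ⟨W, hW⟩).1, hVc⟩ : {X : Set U // Φ X = X})
            ≤ e.symm ⟨Z, hZ⟩ := Set.inter_subset_left
        have h1' := e.le_iff_le.mpr hle
        rw [OrderIso.apply_symm_apply] at h1'
        exact h1'
      have h2 : (e ⟨(e.symm ⟨Z, hZ⟩).1 ∩ (e.symm ⟨W, hW⟩).1, hVc⟩).1 ⊆ W := by
        have hle : (⟨(e.symm ⟨Z, hZ⟩).1 ∩ (e.symm ⟨W, hW⟩).1, hVc⟩ : {X : Set U // Φ X = X})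
            ≤ e.symm ⟨W, hW⟩ := Set.inter_subset_right
        have h1' := e.le_iff_le.mpr hle
        rw [OrderIso.apply_symm_apply] at h1'
        exact h1'
      have h3 : X ⊆ (e.symm ⟨Z, hZ⟩).1 ∩ (e.symm ⟨W, hW⟩).1 := by
        have hXZ : (⟨X, hm.1⟩ : {X : Set U // Φ X = X}) ≤ e.symm ⟨Z, hZ⟩ := by
          rw [← e.le_iff_le, OrderIso.apply_symm_apply]
          intro x hx
          rw [← hZW] at hx
          exact hx.1
        have hXW : (⟨X, hm.1⟩ : {X : Set U // Φ X = X}) ≤ e.symm ⟨W, hW⟩ := by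
          rw [← e.le_iff_le, OrderIso.apply_symm_apply]
          intro x hx
          rw [← hZW] at hx
          exact hx.2
        intro x hx
        exact ⟨hXZ hx, hXW hx⟩
      have h5 : (e ⟨X, hm.1⟩).1 ⊆ (e ⟨(e.symm ⟨Z, hZ⟩).1 ∩ (e.symm ⟨W, hW⟩).1, hVc⟩).1 :=
        e.le_iff_le.mpr (show (⟨X, hm.1⟩ : {X : Set U // Φ X = X}) ≤ _ from h3)
      have h6 : (e ⟨(e.symm ⟨Z, hZ⟩).1 ∩ (e.symm ⟨W, hW⟩).1, hVc⟩).1 ⊆ (e ⟨X, hm.1⟩).1 := by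
        intro x hx
        rw [← hZW]
        exact ⟨h1 hx, h2 hx⟩
      have h7 : (⟨(e.symm ⟨Z, hZ⟩).1 ∩ (e.symm ⟨W, hW⟩).1, hVc⟩ : {X : Set U // Φ X = X})
          = ⟨X, hm.1⟩ := e.injective (Subtype.ext (subset_antisymm h6 h5))
      have h8 : (e.symm ⟨Z, hZ⟩).1 ∩ (e.symm ⟨W, hW⟩).1 = X := congrArg Subtype.val h7
      rcases hm.2.2 _ _ hZ'c hW'c h8 with h | h
      · left
        have h9 : (e.symm ⟨Z, hZ⟩) = ⟨X, hm.1⟩ := Subtype.ext h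
        have h10 : (⟨Z, hZ⟩ : {Y : Set (ℝ × ℝ) // Y ⊆ F ∧ ch1 F Y = Y}) = e ⟨X, hm.1⟩ := by
          rw [← h9, OrderIso.apply_symm_apply]
        exact congrArg Subtype.val h10
      · right
        have h9 : (e.symm ⟨W, hW⟩) = ⟨X, hm.1⟩ := Subtype.ext h
        have h10 : (⟨W, hW⟩ : {Y : Set (ℝ × ℝ) // Y ⊆ F ∧ ch1 F Y = Y}) = e ⟨X, hm.1⟩ := by
          rw [← h9, OrderIso.apply_symm_apply]
        exact congrArg Subtype.val h10
    -- each transferred meet-irreducible is of one of the two interval types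
    have type_of : ∀ (X : Set U) (hm : MirClosed Φ X),
        (∃ m : ℝ, (e ⟨X, hm.1⟩).1 = {p ∈ F | m ≤ p.1}) ∨
        (∃ M : ℝ, (e ⟨X, hm.1⟩).1 = {p ∈ F | p.2 ≤ M}) := by
      intro X hm
      obtain ⟨hYF, hYc⟩ := (e ⟨X, hm.1⟩).2
      rcases (e ⟨X, hm.1⟩).1.eq_empty_or_nonempty with hYe | hYne
      · left
        obtain ⟨m, hm'⟩ : ∃ m : ℝ, ∀ p ∈ F, p.1 < m := by
          rcases F.eq_empty_or_nonempty with rfl | hFne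
          · exact ⟨0, by simp⟩
          · obtain ⟨q, hqF, hq⟩ := Set.exists_max_image F (fun p => p.1) hFfin hFne
            exact ⟨q.1 + 1, fun p hp => lt_of_le_of_lt (hq p hp) (by linarith)⟩
        refine ⟨m, ?_⟩
        rw [hYe]
        refine (Set.eq_empty_iff_forall_notMem.mpr ?_).symm
        rintro p ⟨hpF, hple⟩
        exact absurd hple (not_le.mpr (hm' p hpF))
      · have hYfin : (e ⟨X, hm.1⟩).1.Finite := hFfin.subset hYF
        obtain ⟨q1, hq1Y, hq1min⟩ := Set.exists_min_image _ (fun p => p.1) hYfin hYne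
        obtain ⟨q2, hq2Y, hq2max⟩ := Set.exists_max_image _ (fun p => p.2) hYfin hYne
        have hFne : F.Nonempty := ⟨q1, hYF hq1Y⟩
        obtain ⟨qT, hqTF, hqT⟩ := Set.exists_max_image F (fun p => p.2) hFfin hFne
        obtain ⟨qB, hqBF, hqB⟩ := Set.exists_min_image F (fun p => p.1) hFfin hFne
        have hZc : ch1 F {p ∈ F | q1.1 ≤ p.1} = {p ∈ F | q1.1 ≤ p.1} := by
          apply subset_antisymm
          · rintro C ⟨hCF, hCp⟩
            refine ⟨hCF, ?_⟩
            have hb : convexHull ℝ (⋃ D ∈ {p ∈ F | q1.1 ≤ p.1}, pts1 D) ⊆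
                Set.Icc q1.1 qT.2 := by
              apply biUnion_pts_subset
              rintro p ⟨hpF, hp1⟩
              exact ⟨hp1, (hFcirc p hpF).trans (hqT p hpF), hp1.trans (hFcirc p hpF), hqT p hpF⟩
            exact (hb (hCp (fst_mem_pts1 C))).1
          · exact subset_ch1 (fun p hp => hp.1)
        have hWc : ch1 F {p ∈ F | p.2 ≤ q2.2} = {p ∈ F | p.2 ≤ q2.2} := by
          apply subset_antisymm
          · rintro C ⟨hCF, hCp⟩
            refine ⟨hCF, ?_⟩
            have hb : convexHull ℝ (⋃ D ∈ {p ∈ F | p.2 ≤ q2.2}, pts1 D) ⊆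
                Set.Icc qB.1 q2.2 := by
              apply biUnion_pts_subset
              rintro p ⟨hpF, hp2⟩
              exact ⟨hqB p hpF, (hFcirc p hpF).trans hp2, (hqB p hpF).trans (hFcirc p hpF), hp2⟩
            exact (hb (hCp (snd_mem_pts1 C))).2
          · exact subset_ch1 (fun p hp => hp.1)
        have hZW : {p ∈ F | q1.1 ≤ p.1} ∩ {p ∈ F | p.2 ≤ q2.2} = (e ⟨X, hm.1⟩).1 := by
          apply subset_antisymm
          · rintro p ⟨⟨hpF, hp1⟩, ⟨_, hp2⟩⟩
            rw [← hYc]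
            refine ⟨hpF, ?_⟩
            have hq12 : q1.1 ≤ q2.2 := (hFcirc q1 (hYF hq1Y)).trans (hq2max q1 hq1Y)
            have hm1 : q1.1 ∈ convexHull ℝ (⋃ D ∈ (e ⟨X, hm.1⟩).1, pts1 D) :=
              subset_convexHull ℝ _ (Set.mem_biUnion hq1Y (fst_mem_pts1 q1))
            have hm2 : q2.2 ∈ convexHull ℝ (⋃ D ∈ (e ⟨X, hm.1⟩).1, pts1 D) :=
              subset_convexHull ℝ _ (Set.mem_biUnion hq2Y (snd_mem_pts1 q2))
            have hIcc := Icc_subset_of_mem (convex_convexHull ℝ _) hq12 hm1 hm2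
            intro x hx
            apply hIcc
            rcases hx with rfl | hx
            · exact ⟨hp1, (hFcirc p hpF).trans hp2⟩
            · rw [Set.mem_singleton_iff] at hx; subst hx
              exact ⟨hp1.trans (hFcirc p hpF), hp2⟩
          · intro p hp
            exact ⟨⟨hYF hp, hq1min p hp⟩, ⟨hYF hp, hq2max p hp⟩⟩
        rcases mir' X hm _ _ ⟨fun p hp => hp.1, hZc⟩ ⟨fun p hp => hp.1, hWc⟩ hZW with h | h
        · exact Or.inl ⟨q1.1, h.symm⟩
        · exact Or.inr ⟨q2.2, h.symm⟩
    have t1 := type_of X1 m1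
    have t2 := type_of X2 m2
    have t3 := type_of X3 m3
    have notsame1 : ∀ {Ya Yb : Set (ℝ × ℝ)}, (∃ m : ℝ, Ya = {p ∈ F | m ≤ p.1}) →
        (∃ m : ℝ, Yb = {p ∈ F | m ≤ p.1}) → ¬Ya ⊆ Yb → ¬Yb ⊆ Ya → False := by
      rintro Ya Yb ⟨ma, rfl⟩ ⟨mb, rfl⟩ hab hba
      rcases le_total ma mb with h | h
      · exact hba (fun p hp => ⟨hp.1, h.trans hp.2⟩)
      · exact hab (fun p hp => ⟨hp.1, h.trans hp.2⟩)
    have notsame2 : ∀ {Ya Yb : Set (ℝ × ℝ)}, (∃ M : ℝ, Ya = {p ∈ F | p.2 ≤ M}) →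
        (∃ M : ℝ, Yb = {p ∈ F | p.2 ≤ M}) → ¬Ya ⊆ Yb → ¬Yb ⊆ Ya → False := by
      rintro Ya Yb ⟨Ma, rfl⟩ ⟨Mb, rfl⟩ hab hba
      rcases le_total Ma Mb with h | h
      · exact hab (fun p hp => ⟨hp.1, hp.2.trans h⟩)
      · exact hba (fun p hp => ⟨hp.1, hp.2.trans h⟩)
    rcases t1 with t1 | t1 <;> rcases t2 with t2 | t2 <;> rcases t3 with t3 | t3
    · exact notsame1 t1 t2 j12 j21
    · exact notsame1 t1 t2 j12 j21
    · exact notsame1 t1 t3 j13 j31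
    · exact notsame2 t2 t3 j23 j32
    · exact notsame1 t2 t3 j23 j32
    · exact notsame2 t1 t3 j13 j31
    · exact notsame2 t1 t2 j12 j21
    · exact notsame2 t1 t2 j12 j21
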